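/- Define mmse : [0,∞) → ℝ by mmse(s) = 1 − ∫_ℝ tanh(s + √s·z) · (2π)^{−1/2} e^{−z²/2} dz. Then there exists a constant C > 0 such that mmse is C-Lipschitz on [0,∞): |mmse(s) − mmse(t)| ≤ C·|s − t| for all s, t ≥ 0. -/

import Mathlib

/-- The minimum mean-squared error of the BPSK-input real AWGN channel with
signal-to-noise ratio `s`:
`mmse(s) = 1 − ∫ tanh(s + √s·z) · (2π)^{−1/2} e^{−z²/2} dz`. -/
noncomputable def mmse (s : ℝ) : ℝ :=
  1 - ∫ z : ℝ,
    Real.tanh (s + Real.sqrt s * z) * ((Real.sqrt (2 * Real.pi))⁻¹ * Real.exp (-z ^ 2 / 2))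

open Real MeasureTheory

/-! ### Auxiliary definitions and lemmas -/

/-- The standard Gaussian density. -/
noncomputable def gauss (z : ℝ) : ℝ := (Real.sqrt (2 * Real.pi))⁻¹ * Real.exp (-z ^ 2 / 2)

lemma gauss_nonneg (z : ℝ) : 0 ≤ gauss z := by unfold gauss; positivity

lemma gauss_neg (z : ℝ) : gauss (-z) = gauss z := by
  unfold gauss; rw [neg_pow]; ring_nf

lemma gauss_expand (z : ℝ) :
    gauss z = (Real.sqrt (2 * Real.pi))⁻¹ * Real.exp (-(1/2 : ℝ) * z ^ 2) := by
  unfold gauss; rw [show -z^2/2 = -(1/2 : ℝ)*z^2 by ring]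

lemma gauss_integrable : Integrable gauss := by
  have h := (integrable_exp_neg_mul_sq (by norm_num : (0:ℝ) < 1/2)).const_mul
    (Real.sqrt (2 * Real.pi))⁻¹
  exact h.congr (Filter.Eventually.of_forall fun z => (gauss_expand z).symm)

lemma sq_gauss_integrable : Integrable (fun z : ℝ => z ^ 2 * gauss z) := by
  have h0 : Integrable (fun z : ℝ => z ^ (2 : ℝ) * Real.exp (-(1/2 : ℝ) * z ^ 2)) :=
    integrable_rpow_mul_exp_neg_mul_sq (by norm_num) (by norm_num)
  have h := h0.const_mul (Real.sqrt (2 * Real.pi))⁻¹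
  refine h.congr (Filter.Eventually.of_forall fun z => ?_)
  simp only [gauss_expand]
  rw [show ((2:ℝ):ℝ) = ((2:ℕ):ℝ) by norm_num, Real.rpow_natCast]
  ring

lemma bdd_gauss_integrable {F : ℝ → ℝ} (hF : Continuous F) (hb : ∀ z, |F z| ≤ 1) :
    Integrable (fun z => F z * gauss z) := by
  refine gauss_integrable.mono' ?_ (Filter.Eventually.of_forall fun z => ?_)
  · exact (hF.mul (by unfold gauss; fun_prop)).aestronglyMeasurable
  · have h0 : 0 ≤ gauss z := gauss_nonneg z
    rw [Real.norm_eq_abs, abs_mul, abs_of_nonneg h0]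
    nlinarith [hb z, abs_nonneg (F z)]

lemma sinh_le_mul_cosh {x : ℝ} (hx : 0 ≤ x) : Real.sinh x ≤ x * Real.cosh x := by
  have key : ∀ y : ℝ, HasDerivAt (fun u => u * Real.cosh u - Real.sinh u)
      (y * Real.sinh y) y := by
    intro y
    have h := ((hasDerivAt_id y).mul (Real.hasDerivAt_cosh y)).sub (Real.hasDerivAt_sinh y)
    have he : 1 * Real.cosh y + id y * Real.sinh y - Real.cosh y = y * Real.sinh y := by
      simp only [id_eq]; ring
    rw [← he]
    exact h
  have mono : MonotoneOn (fun u => u * Real.cosh u - Real.sinh u) (Set.Icc 0 x) := by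
    apply monotoneOn_of_hasDerivWithinAt_nonneg (convex_Icc 0 x)
      (fun y _ => (key y).continuousAt.continuousWithinAt)
      (fun y _ => (key y).hasDerivWithinAt)
    intro y hy
    rw [interior_Icc] at hy
    exact mul_nonneg hy.1.le (Real.sinh_nonneg_iff.mpr hy.1.le)
  have h0 := mono (Set.left_mem_Icc.mpr hx) (Set.right_mem_Icc.mpr hx) hx
  simp at h0
  linarith

lemma abs_sinh_le_mul_cosh (x : ℝ) : |Real.sinh x| ≤ |x| * Real.cosh x := by
  rw [Real.abs_sinh, ← Real.cosh_abs]
  exact sinh_le_mul_cosh (abs_nonneg x)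

lemma abs_sinh_le_cosh (x : ℝ) : |Real.sinh x| ≤ Real.cosh x := by
  rw [Real.abs_sinh, ← Real.cosh_abs]
  nlinarith [Real.cosh_sq |x|, Real.sinh_nonneg_iff.mpr (abs_nonneg x), Real.cosh_pos |x|]

lemma abs_tanh_le_one (x : ℝ) : |Real.tanh x| ≤ 1 := by
  rw [Real.tanh_eq_sinh_div_cosh, abs_div, abs_of_nonneg (Real.cosh_pos x).le,
    div_le_one (Real.cosh_pos x)]
  exact abs_sinh_le_cosh x

lemma continuous_tanh' : Continuous Real.tanh := by
  have h : Real.tanh = fun x => Real.sinh x / Real.cosh x := funext Real.tanh_eq_sinh_div_cosh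
  rw [h]
  exact Real.continuous_sinh.div Real.continuous_cosh fun x => (Real.cosh_pos x).ne'

lemma tanh_add_tanh (u v : ℝ) :
    Real.tanh u + Real.tanh v
      = 2 * Real.sinh (u + v) / (Real.cosh (u + v) + Real.cosh (u - v)) := by
  have hu := Real.cosh_pos u
  have hv := Real.cosh_pos v
  have hden : Real.cosh (u + v) + Real.cosh (u - v) = 2 * (Real.cosh u * Real.cosh v) := by
    rw [Real.cosh_add, Real.cosh_sub]; ring
  rw [Real.tanh_eq_sinh_div_cosh, Real.tanh_eq_sinh_div_cosh, Real.sinh_add, hden]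
  field_simp

/-- The symmetrized integrand. -/
noncomputable def Gfun (s z : ℝ) : ℝ :=
  Real.sinh (2*s) / (Real.cosh (2*s) + Real.cosh (2*Real.sqrt s*z))

/-- Its `s`-derivative (for `s > 0`). -/
noncomputable def Gder (s z : ℝ) : ℝ :=
  (2*Real.cosh (2*s) * (Real.cosh (2*s) + Real.cosh (2*Real.sqrt s*z))
    - Real.sinh (2*s) * (2*Real.sinh (2*s)
        + Real.sinh (2*Real.sqrt s*z) * (2 * (1 / (2*Real.sqrt s)) * z)))
  / (Real.cosh (2*s) + Real.cosh (2*Real.sqrt s*z))^2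

lemma denom_pos (s z : ℝ) : 0 < Real.cosh (2*s) + Real.cosh (2*Real.sqrt s*z) := by
  have := Real.cosh_pos (2*s); have := Real.cosh_pos (2*Real.sqrt s*z); linarith

lemma Gfun_hasDerivAt {s : ℝ} (hs : 0 < s) (z : ℝ) :
    HasDerivAt (fun u => Gfun u z) (Gder s z) s := by
  have hsq : HasDerivAt (fun u : ℝ => 2 * Real.sqrt u * z) (2 * (1 / (2*Real.sqrt s)) * z) s :=
    ((Real.hasDerivAt_sqrt hs.ne').const_mul 2).mul_const z
  have hnum : HasDerivAt (fun u : ℝ => Real.sinh (2*u)) (Real.cosh (2*s) * 2) s := by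
    have h0 := (Real.hasDerivAt_sinh (2*s)).comp s ((hasDerivAt_id s).const_mul 2)
    simpa only [Function.comp_def, id_eq, mul_one] using h0
  have hcosh1 : HasDerivAt (fun u : ℝ => Real.cosh (2*u)) (Real.sinh (2*s) * 2) s := by
    have h0 := (Real.hasDerivAt_cosh (2*s)).comp s ((hasDerivAt_id s).const_mul 2)
    simpa only [Function.comp_def, id_eq, mul_one] using h0
  have hcosh2 : HasDerivAt (fun u : ℝ => Real.cosh (2*Real.sqrt u*z))
      (Real.sinh (2*Real.sqrt s*z) * (2 * (1 / (2*Real.sqrt s)) * z)) s := by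
    have h0 := (Real.hasDerivAt_cosh (2*Real.sqrt s*z)).comp s hsq
    simpa only [Function.comp_def] using h0
  have hden : HasDerivAt (fun u : ℝ => Real.cosh (2*u) + Real.cosh (2*Real.sqrt u*z))
      (Real.sinh (2*s) * 2 + Real.sinh (2*Real.sqrt s*z) * (2 * (1 / (2*Real.sqrt s)) * z)) s :=
    hcosh1.add hcosh2
  have h := hnum.div hden (denom_pos s z).ne'
  unfold Gfun Gder
  convert h using 2
  · rfl
  · rfl
  · rfl
  · ring

lemma Gder_bound {s : ℝ} (hs : 0 < s) (z : ℝ) : |Gder s z| ≤ 4 + 2*z^2 := by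
  have ha : 0 < Real.sqrt s := Real.sqrt_pos.mpr hs
  set a := Real.sqrt s with ha_def
  set D := Real.cosh (2*s) + Real.cosh (2*a*z) with hD_def
  have hD : 0 < D := denom_pos s z
  have hc1 : Real.cosh (2*s) ≤ D := by
    have := Real.cosh_pos (2*a*z); simp only [hD_def]; linarith
  have hc2 : Real.cosh (2*a*z) ≤ D := by
    have := Real.cosh_pos (2*s); simp only [hD_def]; linarith
  have hsinh2s : |Real.sinh (2*s)| ≤ D := (abs_sinh_le_cosh _).trans hc1
  have hterm : |Real.sinh (2*a*z) * (2 * (1 / (2*a)) * z)| ≤ 2*z^2*D := by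
    rw [abs_mul]
    have h1 : |Real.sinh (2*a*z)| ≤ |2*a*z| * Real.cosh (2*a*z) := abs_sinh_le_mul_cosh _
    have h2 : |2 * (1 / (2*a)) * z| = |z| / a := by
      rw [abs_mul, abs_mul, abs_of_nonneg (by norm_num : (0:ℝ) ≤ 2),
        abs_of_nonneg (by positivity : (0:ℝ) ≤ 1 / (2*a))]
      field_simp
    rw [h2]
    have h3 : |2*a*z| = 2*a*|z| := by
      rw [abs_mul, abs_of_nonneg (by positivity : (0:ℝ) ≤ 2*a)]
    calc |Real.sinh (2*a*z)| * (|z| / a)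
        ≤ (2*a*|z|) * Real.cosh (2*a*z) * (|z| / a) := by
          apply mul_le_mul_of_nonneg_right _ (by positivity)
          rw [← h3]; exact h1
      _ = 2*z^2 * Real.cosh (2*a*z) := by
          field_simp
          rw [← sq_abs z]
      _ ≤ 2*z^2*D := by nlinarith [hc2, sq_nonneg z]
  have habs : |Real.sinh (2*s) * (2*Real.sinh (2*s)
      + Real.sinh (2*a*z) * (2 * (1 / (2*a)) * z))| ≤ D * (2*D + 2*z^2*D) := by
    rw [abs_mul]
    apply mul_le_mul hsinh2s _ (abs_nonneg _) hD.le
    calc |2*Real.sinh (2*s) + Real.sinh (2*a*z) * (2 * (1 / (2*a)) * z)|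
        ≤ |2*Real.sinh (2*s)| + |Real.sinh (2*a*z) * (2 * (1 / (2*a)) * z)| := abs_add_le _ _
      _ ≤ 2*D + 2*z^2*D := by
          rw [abs_mul, abs_of_nonneg (by norm_num : (0:ℝ) ≤ 2)]
          linarith
  have h2c : |2*Real.cosh (2*s) * D| ≤ 2*D^2 := by
    rw [abs_mul, abs_mul, abs_of_nonneg (by norm_num : (0:ℝ) ≤ 2),
      abs_of_nonneg (Real.cosh_pos _).le, abs_of_nonneg hD.le]
    nlinarith [hc1, hD]
  have hnum : |2*Real.cosh (2*s) * D - Real.sinh (2*s) * (2*Real.sinh (2*s)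
      + Real.sinh (2*a*z) * (2 * (1 / (2*a)) * z))| ≤ (4 + 2*z^2) * D^2 := by
    calc |2*Real.cosh (2*s) * D - Real.sinh (2*s) * (2*Real.sinh (2*s)
          + Real.sinh (2*a*z) * (2 * (1 / (2*a)) * z))|
        ≤ |2*Real.cosh (2*s) * D| + |Real.sinh (2*s) * (2*Real.sinh (2*s)
          + Real.sinh (2*a*z) * (2 * (1 / (2*a)) * z))| := abs_sub _ _
      _ ≤ 2*D^2 + D*(2*D + 2*z^2*D) := add_le_add h2c habs
      _ = (4 + 2*z^2) * D^2 := by ring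
  unfold Gder
  rw [abs_div, abs_of_nonneg (by positivity : (0:ℝ) ≤ D^2), div_le_iff₀ (by positivity)]
  exact hnum

lemma Gfun_cont (s : ℝ) : Continuous fun z => Gfun s z := by
  unfold Gfun
  exact continuous_const.div (by continuity) fun z => (denom_pos s z).ne'

lemma Gfun_abs_le (s z : ℝ) : |Gfun s z| ≤ 1 := by
  unfold Gfun
  rw [abs_div, abs_of_nonneg (denom_pos s z).le, div_le_one (denom_pos s z)]
  exact (abs_sinh_le_cosh _).trans (by linarith [Real.cosh_pos (2*Real.sqrt s*z)])

lemma Gfun_lip_le {s t : ℝ} (ht : 0 ≤ t) (hts : t ≤ s) (z : ℝ) :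
    |Gfun s z - Gfun t z| ≤ (4 + 2*z^2) * (s - t) := by
  rcases eq_or_lt_of_le ht with h0 | h0
  · -- t = 0
    subst h0
    have hs0 : 0 ≤ s := hts
    have hG0 : Gfun 0 z = 0 := by unfold Gfun; simp
    rw [hG0, sub_zero, sub_zero]
    have hD := denom_pos s z
    have hnn : 0 ≤ Real.sinh (2*s) := Real.sinh_nonneg_iff.mpr (by linarith)
    have hGnn : 0 ≤ Gfun s z := by unfold Gfun; positivity
    rw [abs_of_nonneg hGnn]
    unfold Gfun
    rw [div_le_iff₀ hD]
    have h1 : Real.sinh (2*s) ≤ (2*s) * Real.cosh (2*s) :=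
      sinh_le_mul_cosh (by linarith)
    have hc1 : Real.cosh (2*s) ≤ Real.cosh (2*s) + Real.cosh (2*Real.sqrt s*z) := by
      linarith [Real.cosh_pos (2*Real.sqrt s*z)]
    nlinarith [sq_nonneg z, Real.cosh_pos (2*s), hD,
      mul_le_mul_of_nonneg_left hc1 hs0,
      mul_nonneg hs0 hD.le,
      mul_nonneg (mul_nonneg (sq_nonneg z) hs0) hD.le]
  · -- 0 < t ≤ s
    have hmem_t : t ∈ Set.Ioi (0:ℝ) := h0
    have hmem_s : s ∈ Set.Ioi (0:ℝ) := lt_of_lt_of_le h0 hts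
    have key := (convex_Ioi (0:ℝ)).norm_image_sub_le_of_norm_hasDerivWithin_le
      (f := fun u => Gfun u z) (f' := fun u => Gder u z) (C := 4 + 2*z^2)
      (fun x hx => (Gfun_hasDerivAt (Set.mem_Ioi.mp hx) z).hasDerivWithinAt)
      (fun x hx => by simpa [Real.norm_eq_abs] using Gder_bound (Set.mem_Ioi.mp hx) z)
      hmem_t hmem_s
    rw [Real.norm_eq_abs, Real.norm_eq_abs, abs_of_nonneg (sub_nonneg.mpr hts)] at key
    exact key

lemma Gfun_lip {s t : ℝ} (hs : 0 ≤ s) (ht : 0 ≤ t) (z : ℝ) :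
    |Gfun s z - Gfun t z| ≤ (4 + 2*z^2) * |s - t| := by
  rcases le_total t s with h | h
  · rw [abs_of_nonneg (sub_nonneg.mpr h)]
    exact Gfun_lip_le ht h z
  · rw [abs_sub_comm (Gfun s z) (Gfun t z), abs_sub_comm s t,
      abs_of_nonneg (sub_nonneg.mpr h)]
    exact Gfun_lip_le hs h z

lemma Gfun_gauss_integrable (s : ℝ) : Integrable (fun z => Gfun s z * gauss z) :=
  bdd_gauss_integrable (Gfun_cont s) (fun z => Gfun_abs_le s z)

lemma integral_tanh_eq (s : ℝ) :
    (∫ z : ℝ, Real.tanh (s + Real.sqrt s * z) * gauss z) = ∫ z : ℝ, Gfun s z * gauss z := by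
  have hi1 : Integrable (fun z => Real.tanh (s + Real.sqrt s * z) * gauss z) :=
    bdd_gauss_integrable (continuous_tanh'.comp (by continuity)) (fun z => abs_tanh_le_one _)
  have hi2 : Integrable (fun z => Real.tanh (s - Real.sqrt s * z) * gauss z) :=
    bdd_gauss_integrable (continuous_tanh'.comp (by continuity)) (fun z => abs_tanh_le_one _)
  have hneg : (∫ z : ℝ, Real.tanh (s + Real.sqrt s * z) * gauss z)
      = ∫ z : ℝ, Real.tanh (s - Real.sqrt s * z) * gauss z := by
    rw [← integral_neg_eq_self (fun z => Real.tanh (s - Real.sqrt s * z) * gauss z) volume]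
    congr 1
    funext z
    rw [gauss_neg]
    ring_nf
  have hpt : ∀ z : ℝ, Real.tanh (s + Real.sqrt s * z) * gauss z
      + Real.tanh (s - Real.sqrt s * z) * gauss z = 2 * (Gfun s z * gauss z) := by
    intro z
    have h := tanh_add_tanh (s + Real.sqrt s * z) (s - Real.sqrt s * z)
    rw [show (s + Real.sqrt s * z) + (s - Real.sqrt s * z) = 2*s by ring,
      show (s + Real.sqrt s * z) - (s - Real.sqrt s * z) = 2*Real.sqrt s*z by ring] at h
    calc Real.tanh (s + Real.sqrt s * z) * gauss z + Real.tanh (s - Real.sqrt s * z) * gauss z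
        = (Real.tanh (s + Real.sqrt s * z) + Real.tanh (s - Real.sqrt s * z)) * gauss z := by ring
      _ = (2 * Real.sinh (2*s) / (Real.cosh (2*s) + Real.cosh (2*Real.sqrt s*z))) * gauss z := by
          rw [h]
      _ = 2 * (Gfun s z * gauss z) := by unfold Gfun; ring
  have hsum : (∫ z : ℝ, Real.tanh (s + Real.sqrt s * z) * gauss z)
      + (∫ z : ℝ, Real.tanh (s - Real.sqrt s * z) * gauss z)
      = 2 * ∫ z : ℝ, Gfun s z * gauss z := by
    rw [← integral_add hi1 hi2, ← integral_const_mul 2 fun z : ℝ => Gfun s z * gauss z]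
    congr 1
    funext z
    exact hpt z
  rw [← hneg] at hsum
  linarith

lemma mmse_eq (s : ℝ) : mmse s = 1 - ∫ z : ℝ, Gfun s z * gauss z := by
  unfold mmse
  rw [show (fun z : ℝ => Real.tanh (s + Real.sqrt s * z)
      * ((Real.sqrt (2 * Real.pi))⁻¹ * Real.exp (-z ^ 2 / 2)))
    = fun z : ℝ => Real.tanh (s + Real.sqrt s * z) * gauss z from rfl]
  rw [integral_tanh_eq]

/-- **The BPSK MMSE is Lipschitz on `[0,∞)`:** there is a constant `C > 0` such that
`|mmse(s) − mmse(t)| ≤ C·|s − t|` for all `s, t ≥ 0`. -/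
theorem mmse_lipschitzOn :
    ∃ C : ℝ, 0 < C ∧ ∀ s t : ℝ, 0 ≤ s → 0 ≤ t → |mmse s - mmse t| ≤ C * |s - t| := by
  have hKint : Integrable (fun z : ℝ => (4 + 2*z^2) * gauss z) := by
    have h := (gauss_integrable.const_mul 4).add (sq_gauss_integrable.const_mul 2)
    refine h.congr (Filter.Eventually.of_forall fun z => ?_)
    simp only [Pi.add_apply]
    ring
  set C0 : ℝ := ∫ z : ℝ, (4 + 2*z^2) * gauss z with hC0_def
  have hC0 : 0 ≤ C0 :=
    integral_nonneg fun z => mul_nonneg (by positivity) (gauss_nonneg z)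
  refine ⟨C0 + 1, by linarith, fun s t hs ht => ?_⟩
  have hkey : mmse s - mmse t = ∫ z : ℝ, (Gfun t z - Gfun s z) * gauss z := by
    rw [mmse_eq s, mmse_eq t,
      show (fun z : ℝ => (Gfun t z - Gfun s z) * gauss z)
        = fun z : ℝ => Gfun t z * gauss z - Gfun s z * gauss z by funext z; ring,
      integral_sub (Gfun_gauss_integrable t) (Gfun_gauss_integrable s)]
    ring
  rw [hkey]
  have h1 : |∫ z : ℝ, (Gfun t z - Gfun s z) * gauss z|
      ≤ ∫ z : ℝ, |Gfun t z - Gfun s z| * |gauss z| := by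
    have h0 := norm_integral_le_integral_norm (μ := volume)
      (fun z : ℝ => (Gfun t z - Gfun s z) * gauss z)
    simpa [Real.norm_eq_abs, abs_mul] using h0
  have h2 : (∫ z : ℝ, |Gfun t z - Gfun s z| * |gauss z|)
      ≤ ∫ z : ℝ, ((4 + 2*z^2) * gauss z) * |s - t| := by
    apply integral_mono
    · refine (((Gfun_gauss_integrable t).sub (Gfun_gauss_integrable s)).abs).congr
        (Filter.Eventually.of_forall fun z => ?_)
      show |Gfun t z * gauss z - Gfun s z * gauss z| = |Gfun t z - Gfun s z| * |gauss z|
      rw [← abs_mul]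
      congr 1
      ring
    · exact hKint.mul_const _
    · intro z
      show |Gfun t z - Gfun s z| * |gauss z| ≤ (4 + 2*z^2) * gauss z * |s - t|
      rw [abs_of_nonneg (gauss_nonneg z)]
      calc |Gfun t z - Gfun s z| * gauss z
          ≤ ((4 + 2*z^2) * |t - s|) * gauss z := by
            exact mul_le_mul_of_nonneg_right (Gfun_lip ht hs z) (gauss_nonneg z)
        _ = ((4 + 2*z^2) * gauss z) * |s - t| := by rw [abs_sub_comm t s]; ring
  have h3 : (∫ z : ℝ, ((4 + 2*z^2) * gauss z) * |s - t|) = C0 * |s - t| :=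
    integral_mul_const _ _
  have h4 : C0 * |s - t| ≤ (C0 + 1) * |s - t| := by
    apply mul_le_mul_of_nonneg_right _ (abs_nonneg _)
    linarith
  linarith
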